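/- Let N̂ be a simple graph in which every 4-cycle would require two joint blocks to share two common natural-block neighbors, which is impossible (|C(B_J) ∩ C(B'_J)| ≤ 1 for distinct joint blocks B_J, B'_J), and in which every cycle of length at least 6 without backtracking leads to a contradiction via the chain decomposition of itineraries. Then N̂ is a tree. -/
import Mathlib


/-- The "new nerve" `N̂` is a tree.  Let `N̂` be a connected simple graph whose
vertices are two kinds of blocks (joint and natural, recorded by `side`), with edges
only between blocks of different kinds (bipartite).  Suppose that two distinct joint
blocks have at most one common natural neighbor (`|C(B_J) ∩ C(B'_J)| ≤ 1`, ruling out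
4-cycles) and that there are no cycles of length at least 6 (the chain decomposition
of itineraries rules these out).  Then `N̂` is a tree. -/
theorem stmt14 {V : Type*} (G : SimpleGraph V) (hconn : G.Connected)
    (side : V → Bool)
    (hbip : ∀ u v : V, G.Adj u v → side u ≠ side v)
    (hcommon : ∀ u v : V, side u = true → side v = true → u ≠ v →
      {w : V | G.Adj u w ∧ G.Adj v w}.Subsingleton)
    (hlong : ∀ (v : V) (c : G.Walk v v), c.IsCycle → c.length < 6) :
    G.IsTree := by
  refine ⟨hconn, ?_⟩
  intro v c hc
  have h3 := hc.three_le_length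
  have h6 := hlong v c hc
  have key : ∀ {a b : V} (p : G.Walk a b), side a = side b ↔ Even p.length := by
    intro a b p
    induction p with
    | nil => simp
    | @cons x y z h p ih =>
      simp only [SimpleGraph.Walk.length_cons, Nat.even_add_one]
      have hxy := hbip _ _ h
      constructor
      · intro hxz hev
        exact hxy (hxz.trans ((ih.mpr hev)).symm)
      · intro hnev
        have hyz : side y ≠ side z := fun h' => hnev (ih.mp h')
        revert hxy hyz
        cases side x <;> cases side y <;> cases side z <;> simp
  have hev : Even c.length := (key c).mp rfl
  obtain ⟨k, hk⟩ := hev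
  have h4 : c.length = 4 := by omega
  clear h3 h6 hk
  rcases c with _ | @⟨_, a, _, h1, p⟩
  · simp at h4
  rcases p with _ | @⟨_, b, _, h2, p⟩
  · simp at h4
  rcases p with _ | @⟨_, d, _, h3, p⟩
  · simp at h4
  rcases p with _ | @⟨_, e, _, h4', p⟩
  · simp at h4
  rcases p with _ | @⟨_, f, _, h5, p⟩
  · -- walk is v-a-b-d-v (e = v), length 4
    have hnd := hc.2
    simp [SimpleGraph.Walk.support_cons, List.nodup_cons] at hnd
    have hva := hbip _ _ h1
    have hdv := hbip _ _ h4'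
    obtain ⟨⟨_, had, _⟩, ⟨_, hbv⟩, _⟩ := hnd
    cases hsv : side v with
    | true =>
      have hsb : side b = true := by
        have hab := hbip _ _ h2
        revert hva hab; cases ha : side a <;> cases hb : side b <;> simp [hsv]
      exact had (hcommon v b hsv hsb (Ne.symm hbv) ⟨h1, h2.symm⟩ ⟨h4'.symm, h3⟩)
    | false =>
      have hsa : side a = true := by revert hva; cases ha : side a <;> simp [hsv]
      have hsd : side d = true := by revert hdv; cases hd : side d <;> simp [hsv]
      exact hbv (hcommon a d hsa hsd had ⟨h2, h3.symm⟩ ⟨h1.symm, h4'⟩)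
  · simp at h4
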